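/- Suppose N = 0, and suppose there exist a real number β and a continuous function W : [r_i, r_o] → ℝ such that r·Q'(r) = W(r)·(U(r) − β) for all r ∈ [r_i, r_o] and 0 ≤ W(r) ≤ (π/ln η)²/r_o² for all r ∈ [r_i, r_o] (the Kelvin–Arnol'd II condition for axisymmetric disturbances in an annulus). Then G(r) = 0 for all r ∈ [r_i, r_o]; that is, no nontrivial solution with Im c ≠ 0 exists. -/

import Mathlib

open Real MeasureTheory

open Set

set_option maxHeartbeats 1000000

lemma poincare_aux (x y b δ : ℝ) (hx : 0 < x) (hxy : x < y) (hb : 0 < b) (hδ : 0 < δ)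
    (hsum : b * (Real.log y - Real.log x) + 2 * δ = Real.pi)
    (u u' : ℝ → ℝ) (hu : ContinuousOn u (Set.Icc x y)) (hu' : ContinuousOn u' (Set.Icc x y))
    (hd : ∀ r ∈ Set.Ioo x y, HasDerivAt u (u' r) r)
    (h0 : u x = 0) (h1 : u y = 0) :
    b ^ 2 * ∫ r in x..y, (u r) ^ 2 / r ≤ ∫ r in x..y, r * (u' r) ^ 2 := by
  have hxy' : x ≤ y := hxy.le
  set θ : ℝ → ℝ := fun r => b * (Real.log r - Real.log x) + δ with hθdef
  have hθmem : ∀ r ∈ Set.Icc x y, δ ≤ θ r ∧ θ r ≤ Real.pi - δ := by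
    intro r hr
    have hlr : Real.log x ≤ Real.log r := Real.log_le_log hx hr.1
    have hry : Real.log r ≤ Real.log y := Real.log_le_log (lt_of_lt_of_le hx hr.1) hr.2
    constructor
    · simp only [hθdef]; nlinarith
    · simp only [hθdef]; nlinarith
  have hsin : ∀ r ∈ Set.Icc x y, 0 < Real.sin (θ r) := by
    intro r hr
    refine Real.sin_pos_of_pos_of_lt_pi (lt_of_lt_of_le hδ (hθmem r hr).1) ?_
    have := (hθmem r hr).2; linarith
  set φ : ℝ → ℝ := fun r => b * Real.cos (θ r) / Real.sin (θ r) with hφdef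
  set ψ : ℝ → ℝ := fun r => φ r * u r ^ 2 with hψdef
  set ψ' : ℝ → ℝ := fun r =>
    -(b ^ 2 / (r * Real.sin (θ r) ^ 2)) * u r ^ 2 + φ r * (2 * u r * u' r) with hψ'def
  -- derivative of ψ on Ioo
  have hψd : ∀ r ∈ Set.Ioo x y, HasDerivAt ψ (ψ' r) r := by
    intro r hr
    have hr0 : 0 < r := lt_trans hx hr.1
    have hsr : Real.sin (θ r) ≠ 0 := (hsin r (Ioo_subset_Icc_self hr)).ne'
    have hθd : HasDerivAt θ (b / r) r := by
      have h1 : HasDerivAt Real.log r⁻¹ r := Real.hasDerivAt_log hr0.ne'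
      have h2 := ((h1.sub_const (Real.log x)).const_mul b).add_const δ
      refine h2.congr_deriv ?_
      rw [div_eq_mul_inv]
    have hcos : HasDerivAt (fun r => Real.cos (θ r)) (-Real.sin (θ r) * (b / r)) r :=
      (Real.hasDerivAt_cos (θ r)).comp r hθd
    have hsinD : HasDerivAt (fun r => Real.sin (θ r)) (Real.cos (θ r) * (b / r)) r :=
      (Real.hasDerivAt_sin (θ r)).comp r hθd
    have hs2 : Real.sin (θ r) ^ 2 + Real.cos (θ r) ^ 2 = 1 := Real.sin_sq_add_cos_sq (θ r)
    have hφd : HasDerivAt φ (-(b ^ 2 / (r * Real.sin (θ r) ^ 2))) r := by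
      have h3 := (hcos.const_mul b).div hsinD hsr
      refine h3.congr_deriv ?_
      field_simp
      linear_combination (-1) * hs2
    have hu2 : HasDerivAt (fun r => u r ^ 2) (2 * u r * u' r) r := by
      have := (hd r hr).pow 2
      refine this.congr_deriv ?_
      simp
    exact hφd.mul hu2
  -- key pointwise inequality
  have key : ∀ r ∈ Set.Ioo x y, b ^ 2 * (u r ^ 2 / r) + ψ' r ≤ r * u' r ^ 2 := by
    intro r hr
    have hr0 : 0 < r := lt_trans hx hr.1
    have hsr : Real.sin (θ r) ≠ 0 := (hsin r (Ioo_subset_Icc_self hr)).ne'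
    have hs2 : Real.sin (θ r) ^ 2 + Real.cos (θ r) ^ 2 = 1 := Real.sin_sq_add_cos_sq (θ r)
    have hsq : 0 ≤ r * (u' r - φ r * u r / r) ^ 2 := by positivity
    have hid : r * u' r ^ 2 - (b ^ 2 * (u r ^ 2 / r) + ψ' r)
        = r * (u' r - φ r * u r / r) ^ 2 := by
      simp only [hψ'def, hφdef]
      field_simp
      linear_combination (-(b ^ 2 * u r ^ 2)) * hs2
    linarith [hid ▸ hsq]
  -- continuity facts
  have hIcc : Set.uIcc x y = Set.Icc x y := Set.uIcc_of_le hxy'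
  have hlogc : ContinuousOn Real.log (Set.Icc x y) :=
    Real.continuousOn_log.mono (fun r hr => by
      simp only [Set.mem_compl_iff, Set.mem_singleton_iff]
      exact (lt_of_lt_of_le hx hr.1).ne')
  have hθc : ContinuousOn θ (Set.Icc x y) :=
    (continuousOn_const.mul (hlogc.sub continuousOn_const)).add continuousOn_const
  have hsinc : ContinuousOn (fun r => Real.sin (θ r)) (Set.Icc x y) :=
    Real.continuous_sin.comp_continuousOn hθc
  have hcosc : ContinuousOn (fun r => Real.cos (θ r)) (Set.Icc x y) :=
    Real.continuous_cos.comp_continuousOn hθc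
  have hφc : ContinuousOn φ (Set.Icc x y) :=
    (continuousOn_const.mul hcosc).div hsinc (fun r hr => (hsin r hr).ne')
  have hψc : ContinuousOn ψ (Set.Icc x y) := hφc.mul (hu.pow 2)
  have hψ'c : ContinuousOn ψ' (Set.Icc x y) := by
    apply ContinuousOn.add
    · refine ContinuousOn.mul (ContinuousOn.neg ?_) (hu.pow 2)
      refine ContinuousOn.div continuousOn_const (continuousOn_id.mul (hsinc.pow 2)) ?_
      intro r hr
      have h1 : 0 < Real.sin (θ r) := hsin r hr
      have h2 : 0 < r := lt_of_lt_of_le hx hr.1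
      show r * Real.sin (θ r) ^ 2 ≠ 0
      positivity
    · exact hφc.mul ((continuousOn_const.mul hu).mul hu')
  have hψ'i : IntervalIntegrable ψ' volume x y := by
    apply ContinuousOn.intervalIntegrable; rwa [hIcc]
  have hAi : IntervalIntegrable (fun r => r * u' r ^ 2) volume x y := by
    apply ContinuousOn.intervalIntegrable; rw [hIcc]
    exact continuousOn_id.mul (hu'.pow 2)
  have hBi : IntervalIntegrable (fun r => u r ^ 2 / r) volume x y := by
    apply ContinuousOn.intervalIntegrable; rw [hIcc]
    exact (hu.pow 2).div continuousOn_id (fun r hr => (lt_of_lt_of_le hx hr.1).ne')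
  -- FTC
  have hFTC : ∫ r in x..y, ψ' r = ψ y - ψ x :=
    intervalIntegral.integral_eq_sub_of_hasDerivAt_of_le hxy' hψc (fun r hr => hψd r hr) hψ'i
  have hψx : ψ x = 0 := by simp [hψdef, h0]
  have hψy : ψ y = 0 := by simp [hψdef, h1]
  -- integral of the nonnegative function
  have hnn : 0 ≤ ∫ r in x..y, (r * u' r ^ 2 - (b ^ 2 * (u r ^ 2 / r) + ψ' r)) := by
    apply intervalIntegral.integral_nonneg_of_ae_restrict hxy'
    have hmem : ∀ᵐ r ∂(volume.restrict (Set.Icc x y)), r ∈ Set.Icc x y :=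
      ae_restrict_mem measurableSet_Icc
    have hne : ∀ᵐ r ∂(volume.restrict (Set.Icc x y)), r ≠ x ∧ r ≠ y := by
      rw [MeasureTheory.ae_iff]
      have hss : {a | ¬(a ≠ x ∧ a ≠ y)} = {x, y} := by
        ext a; simp [not_and_or, or_comm, Classical.not_not]; tauto
      rw [hss]
      refine le_antisymm (le_trans (Measure.restrict_apply_le _ _) ?_) (zero_le)
      have : volume ({x, y} : Set ℝ) ≤ volume ({x} : Set ℝ) + volume ({y} : Set ℝ) :=
        measure_union_le _ _
      simpa using this
    filter_upwards [hmem, hne] with r hr hrne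
    have hrIoo : r ∈ Set.Ioo x y :=
      ⟨lt_of_le_of_ne hr.1 (Ne.symm hrne.1), lt_of_le_of_ne hr.2 hrne.2⟩
    have := key r hrIoo
    show (0:ℝ) ≤ _
    linarith
  have hsplit : ∫ r in x..y, (r * u' r ^ 2 - (b ^ 2 * (u r ^ 2 / r) + ψ' r))
      = (∫ r in x..y, r * u' r ^ 2) - (b ^ 2 * ∫ r in x..y, u r ^ 2 / r)
        - ∫ r in x..y, ψ' r := by
    rw [intervalIntegral.integral_sub hAi (((hBi.const_mul (b^2))).add hψ'i),
      intervalIntegral.integral_add (hBi.const_mul (b^2)) hψ'i,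
      intervalIntegral.integral_const_mul]
    ring
  rw [hsplit, hFTC, hψx, hψy] at hnn
  linarith


/-- Kelvin–Arnol'd II sufficient condition for stability of axisymmetric base
flows in an annulus, axisymmetric case (`N = 0`): if there exist `β` and a
continuous `W` with `r Q'(r) = W(r)(U(r) - β)` and `0 ≤ W ≤ (π/ln η)²/ro²`
on `[ri, ro]`, then the Rayleigh-type equation has no nontrivial solution
with `Im c ≠ 0`. -/
theorem stmt_2
    (ri ro : ℝ) (hri : 0 < ri) (hio : ri < ro)
    (N k : ℝ) (hN : N = 0) (hk : 0 < k)
    (c : ℂ) (hc : c.im ≠ 0)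
    (U Q : ℝ → ℝ)
    (hU : ContDiffOn ℝ 2 U (Set.Icc ri ro))
    (hQ : ∀ r, Q r = -(r * deriv U r) / (N ^ 2 + r ^ 2))
    (G : ℝ → ℂ)
    (hG : ContDiffOn ℝ 2 G (Set.Icc ri ro))
    (hGi : G ri = 0) (hGo : G ro = 0)
    (heq : ∀ r ∈ Set.Icc ri ro,
      deriv (fun s : ℝ => ((s / (N ^ 2 + s ^ 2) : ℝ) : ℂ) *
          deriv (fun t : ℝ => (t : ℂ) * G t) s) r
        - (k : ℂ) ^ 2 * G r
        + ((deriv Q r : ℝ) : ℂ) / ((U r : ℂ) - c) * ((r : ℂ) * G r) = 0)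
    (β : ℝ) (W : ℝ → ℝ)
    (hWc : ContinuousOn W (Set.Icc ri ro))
    (hWQ : ∀ r ∈ Set.Icc ri ro, r * deriv Q r = W r * (U r - β))
    (hWlo : ∀ r ∈ Set.Icc ri ro, 0 ≤ W r)
    (hWhi : ∀ r ∈ Set.Icc ri ro,
      W r ≤ (Real.pi / Real.log (ri / ro)) ^ 2 / ro ^ 2) :
    ∀ r ∈ Set.Icc ri ro, G r = 0 := by
  subst hN
  have hro : 0 < ro := lt_trans hri hio
  have hio' : ri ≤ ro := hio.le
  set F : ℝ → ℂ := fun t : ℝ => (t : ℂ) * G t with hFdef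
  have hFc : ContDiffOn ℝ 2 F (Set.Icc ri ro) :=
    (Complex.ofRealCLM.contDiff.contDiffOn).mul hG
  set D : ℝ → ℂ := derivWithin F (Set.Icc ri ro) with hDdef
  have hUD : UniqueDiffOn ℝ (Set.Icc ri ro) := uniqueDiffOn_Icc hio
  have hDc1 : ContDiffOn ℝ 1 D (Set.Icc ri ro) := hFc.derivWithin hUD (by norm_num)
  have hDcont : ContinuousOn D (Set.Icc ri ro) := hDc1.continuousOn
  have hFcont : ContinuousOn F (Set.Icc ri ro) := hFc.continuousOn
  have hGcont : ContinuousOn G (Set.Icc ri ro) := hG.continuousOn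
  have hUcont : ContinuousOn U (Set.Icc ri ro) := hU.continuousOn
  have hne0 : ∀ r ∈ Set.Icc ri ro, r ≠ 0 := fun r hr => (lt_of_lt_of_le hri hr.1).ne'
  have hFD : ∀ r ∈ Set.Ioo ri ro, HasDerivAt F (D r) r := by
    intro r hr
    have hmem : Set.Icc ri ro ∈ nhds r := Icc_mem_nhds hr.1 hr.2
    have h1 : DifferentiableAt ℝ F r :=
      ((hFc.differentiableOn (by norm_num)) r (Set.Ioo_subset_Icc_self hr)).differentiableAt hmem
    have h2 : D r = deriv F r := h1.derivWithin (hUD r (Set.Ioo_subset_Icc_self hr))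
    rw [h2]; exact h1.hasDerivAt
  have hDD : ∀ r ∈ Set.Ioo ri ro, DifferentiableAt ℝ D r := by
    intro r hr
    exact ((hDc1.differentiableOn one_ne_zero) r (Set.Ioo_subset_Icc_self hr)).differentiableAt
      (Icc_mem_nhds hr.1 hr.2)
  set q : ℝ → ℝ := fun r => W r * (U r - β) / r with hqdef
  have hqQ : ∀ r ∈ Set.Icc ri ro, deriv Q r = q r := by
    intro r hr
    have h := hWQ r hr
    rw [hqdef]
    rw [eq_div_iff (hne0 r hr)]
    linarith [h]
  have hz : ∀ r : ℝ, ((U r : ℂ) - c) ≠ 0 := by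
    intro r h
    apply hc
    have := congrArg Complex.im h
    simpa using this
  set B : ℝ → ℂ := fun s : ℝ => ((s : ℂ))⁻¹ * D s with hBdef
  have hBdiff : ∀ r ∈ Set.Ioo ri ro, DifferentiableAt ℝ B r := by
    intro r hr
    have hr0 : (r : ℂ) ≠ 0 := Complex.ofReal_ne_zero.2 (lt_trans hri hr.1).ne'
    exact (Complex.ofRealCLM.differentiable.differentiableAt.inv hr0).mul (hDD r hr)
  have hBderiv : ∀ r ∈ Set.Ioo ri ro,
      deriv B r = (k : ℂ) ^ 2 * G r - ((q r : ℝ) : ℂ) / ((U r : ℂ) - c) * ((r : ℂ) * G r) := by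
    intro r hr
    have hEq : (fun s : ℝ => ((s / (0 ^ 2 + s ^ 2) : ℝ) : ℂ) *
        deriv (fun t : ℝ => (t : ℂ) * G t) s) =ᶠ[nhds r] B := by
      filter_upwards [isOpen_Ioo.mem_nhds hr] with s hs
      have hs0 : s ≠ 0 := (lt_trans hri hs.1).ne'
      have h1 : deriv F s = D s := (hFD s hs).deriv
      have h2 : (s / (0 ^ 2 + s ^ 2) : ℝ) = s⁻¹ := by
        rw [zero_pow (by norm_num), zero_add, pow_two, div_mul_eq_div_div, div_self hs0, one_div]
      show ((s / (0 ^ 2 + s ^ 2) : ℝ) : ℂ) * deriv F s = _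
      rw [h1, h2, hBdef]
      push_cast
      ring
    have h := heq r (Set.Ioo_subset_Icc_self hr)
    have h3 : deriv (fun s : ℝ => ((s / (0 ^ 2 + s ^ 2) : ℝ) : ℂ) *
        deriv (fun t : ℝ => (t : ℂ) * G t) s) r = deriv B r := hEq.deriv_eq
    rw [h3, hqQ r (Set.Ioo_subset_Icc_self hr)] at h
    linear_combination h
  set Φ : ℝ → ℂ := fun r => B r * (starRingEnd ℂ) (F r) with hΦdef
  set Φ' : ℝ → ℂ := fun r =>
    ((k : ℂ) ^ 2 * G r - ((q r : ℝ) : ℂ) / ((U r : ℂ) - c) * F r) * (starRingEnd ℂ) (F r)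
      + ((r : ℂ))⁻¹ * D r * (starRingEnd ℂ) (D r) with hΦ'def
  have hΦd : ∀ r ∈ Set.Ioo ri ro, HasDerivAt Φ (Φ' r) r := by
    intro r hr
    have h1 : HasDerivAt B (deriv B r) r := (hBdiff r hr).hasDerivAt
    have h2 : HasDerivAt (fun s => (starRingEnd ℂ) (F s)) ((starRingEnd ℂ) (D r)) r := by
      simpa using (hFD r hr).star
    have h3 := h1.mul h2
    rw [hBderiv r hr] at h3
    exact h3
  have hinvcont : ContinuousOn (fun r : ℝ => ((r : ℂ))⁻¹) (Set.Icc ri ro) :=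
    Complex.continuous_ofReal.continuousOn.inv₀
      (fun r hr => Complex.ofReal_ne_zero.2 (hne0 r hr))
  have hΦcont : ContinuousOn Φ (Set.Icc ri ro) :=
    (hinvcont.mul hDcont).mul (continuous_star.comp_continuousOn hFcont)
  have hqcont : ContinuousOn q (Set.Icc ri ro) :=
    (hWc.mul (hUcont.sub continuousOn_const)).div continuousOn_id hne0
  have hUCc : ContinuousOn (fun r => ((U r : ℂ) - c)) (Set.Icc ri ro) :=
    (Complex.continuous_ofReal.comp_continuousOn hUcont).sub continuousOn_const
  have hΦ'cont : ContinuousOn Φ' (Set.Icc ri ro) := by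
    apply ContinuousOn.add
    · refine ContinuousOn.mul ?_ (continuous_star.comp_continuousOn hFcont)
      refine ContinuousOn.sub (continuousOn_const.mul hGcont) ?_
      exact ((Complex.continuous_ofReal.comp_continuousOn hqcont).div hUCc
        (fun r _ => hz r)).mul hFcont
    · exact (hinvcont.mul hDcont).mul (continuous_star.comp_continuousOn hDcont)
  have hΦ'int : IntervalIntegrable Φ' volume ri ro := by
    apply ContinuousOn.intervalIntegrable; rwa [Set.uIcc_of_le hio']
  have hint0 : ∫ r in ri..ro, Φ' r = 0 := by
    rw [intervalIntegral.integral_eq_sub_of_hasDerivAt_of_le hio' hΦcont hΦd hΦ'int]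
    have hFri : F ri = 0 := by rw [hFdef]; simp [hGi]
    have hFro : F ro = 0 := by rw [hFdef]; simp [hGo]
    rw [hΦdef]
    simp [hFri, hFro]
  set nsq : ℝ → ℝ := fun r => (U r - c.re) ^ 2 + c.im ^ 2 with hnsqdef
  have hnsqpos : ∀ r, 0 < nsq r := by
    intro r
    have h2 : (0:ℝ) < c.im ^ 2 := lt_of_le_of_ne (sq_nonneg _) (Ne.symm (pow_ne_zero 2 hc))
    rw [hnsqdef]
    positivity
  set f₁ : ℝ → ℝ := fun r => k ^ 2 * (Complex.normSq (F r) / r) + Complex.normSq (D r) / r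
      - q r * Complex.normSq (F r) * (U r - c.re) / nsq r with hf₁def
  set f₂ : ℝ → ℝ := fun r => -c.im * (q r * Complex.normSq (F r) / nsq r) with hf₂def
  have hinv2 : ∀ r, ((U r : ℂ) - c)⁻¹ = ↑((U r - c.re) / nsq r) + ↑(c.im / nsq r) * Complex.I := by
    intro r
    have hns : Complex.normSq ((U r : ℂ) - c) = nsq r := by
      simp [Complex.normSq_apply, hnsqdef]
      ring
    rw [Complex.ext_iff]
    constructor
    · rw [Complex.inv_re, hns]
      simp only [Complex.sub_re, Complex.ofReal_re, Complex.add_re, Complex.mul_re,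
        Complex.ofReal_im, Complex.I_re, Complex.I_im]
      ring
    · rw [Complex.inv_im, hns]
      simp only [Complex.sub_im, Complex.ofReal_im, Complex.add_im, Complex.mul_im,
        Complex.ofReal_re, Complex.I_re, Complex.I_im]
      ring
  have hrepoint : ∀ r ∈ Set.Icc ri ro, (Φ' r).re = f₁ r ∧ (Φ' r).im = f₂ r := by
    intro r hr
    have hr0 : r ≠ 0 := hne0 r hr
    have hns : nsq r ≠ 0 := (hnsqpos r).ne'
    have hk2 : ((k:ℂ)) ^ 2 = ((k ^ 2 : ℝ) : ℂ) := by push_cast; ring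
    have hinv1 : ((r : ℂ))⁻¹ = ((r⁻¹ : ℝ) : ℂ) := (Complex.ofReal_inv r).symm
    rw [hΦ'def, hf₁def, hf₂def, hFdef]
    simp only [div_eq_mul_inv, hinv2, hinv1, hk2]
    constructor
    · simp only [Complex.add_re, Complex.add_im, Complex.mul_re, Complex.mul_im,
        Complex.sub_re, Complex.sub_im, Complex.I_re, Complex.I_im, Complex.normSq_apply,
        Complex.ofReal_re, Complex.ofReal_im, Complex.conj_re, Complex.conj_im]
      field_simp
      ring
    · simp only [Complex.add_re, Complex.add_im, Complex.mul_re, Complex.mul_im,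
        Complex.sub_re, Complex.sub_im, Complex.I_re, Complex.I_im, Complex.normSq_apply,
        Complex.ofReal_re, Complex.ofReal_im, Complex.conj_re, Complex.conj_im]
      field_simp
      ring
  -- continuity / integrability of the real integrands
  have hnF : ContinuousOn (fun r => Complex.normSq (F r)) (Set.Icc ri ro) :=
    Complex.continuous_normSq.comp_continuousOn hFcont
  have hnD : ContinuousOn (fun r => Complex.normSq (D r)) (Set.Icc ri ro) :=
    Complex.continuous_normSq.comp_continuousOn hDcont
  have hnsqc : ContinuousOn nsq (Set.Icc ri ro) := by
    rw [hnsqdef]; exact ((hUcont.sub continuousOn_const).pow 2).add continuousOn_const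
  have hIcc : Set.uIcc ri ro = Set.Icc ri ro := Set.uIcc_of_le hio'
  have hSint : IntervalIntegrable (fun r => Complex.normSq (F r) / r) volume ri ro := by
    apply ContinuousOn.intervalIntegrable; rw [hIcc]; exact hnF.div continuousOn_id hne0
  have hTint : IntervalIntegrable (fun r => Complex.normSq (D r) / r) volume ri ro := by
    apply ContinuousOn.intervalIntegrable; rw [hIcc]; exact hnD.div continuousOn_id hne0
  have hEint : IntervalIntegrable (fun r => q r * Complex.normSq (F r) / nsq r) volume ri ro := by
    apply ContinuousOn.intervalIntegrable; rw [hIcc]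
    exact (hqcont.mul hnF).div hnsqc (fun r _ => (hnsqpos r).ne')
  have hRint : IntervalIntegrable
      (fun r => q r * Complex.normSq (F r) * (U r - c.re) / nsq r) volume ri ro := by
    apply ContinuousOn.intervalIntegrable; rw [hIcc]
    exact ((hqcont.mul hnF).mul (hUcont.sub continuousOn_const)).div hnsqc
      (fun r _ => (hnsqpos r).ne')
  have hf₁int : IntervalIntegrable f₁ volume ri ro := by
    rw [hf₁def]; exact (((hSint.const_mul (k ^ 2))).add hTint).sub hRint
  -- the two real identities
  have hre0 : (∫ r in ri..ro, f₁ r) = 0 := by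
    have h2 := Complex.reCLM.intervalIntegral_comp_comm hΦ'int
    rw [hint0] at h2
    have h3 : (∫ r in ri..ro, (Φ' r).re) = 0 := by simpa using h2
    rw [← h3]
    apply intervalIntegral.integral_congr
    intro r hr
    rw [hIcc] at hr
    exact ((hrepoint r hr).1).symm
  have him0 : (∫ r in ri..ro, f₂ r) = 0 := by
    have h2 := Complex.imCLM.intervalIntegral_comp_comm hΦ'int
    rw [hint0] at h2
    have h3 : (∫ r in ri..ro, (Φ' r).im) = 0 := by simpa using h2
    rw [← h3]
    apply intervalIntegral.integral_congr
    intro r hr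
    rw [hIcc] at hr
    exact ((hrepoint r hr).2).symm
  set S : ℝ := ∫ r in ri..ro, Complex.normSq (F r) / r with hSdef
  set T : ℝ := ∫ r in ri..ro, Complex.normSq (D r) / r with hTdef
  set Rr : ℝ := ∫ r in ri..ro, q r * Complex.normSq (F r) * (U r - c.re) / nsq r with hRdef
  set E : ℝ := ∫ r in ri..ro, q r * Complex.normSq (F r) / nsq r with hEdef
  clear_value S T Rr E
  have hE0 : E = 0 := by
    have h4 : (∫ r in ri..ro, f₂ r) = -c.im * E := by
      rw [hf₂def, hEdef]; exact intervalIntegral.integral_const_mul _ _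
    rw [him0] at h4
    rcases mul_eq_zero.1 h4.symm with h | h
    · exact absurd (neg_eq_zero.1 h) hc
    · exact h
  have hmain : k ^ 2 * S + T = Rr := by
    have h5 : (∫ r in ri..ro, f₁ r) = k ^ 2 * S + T - Rr := by
      rw [hf₁def]
      rw [intervalIntegral.integral_sub ((hSint.const_mul (k ^ 2)).add hTint) hRint,
        intervalIntegral.integral_add (hSint.const_mul (k ^ 2)) hTint,
        intervalIntegral.integral_const_mul, hSdef, hTdef, hRdef]
    rw [hre0] at h5
    linarith
  -- bounding Rr
  set CC : ℝ := (Real.pi / Real.log (ri / ro)) ^ 2 / ro ^ 2 with hCdef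
  set g : ℝ → ℝ := fun r => Complex.normSq (F r) / (r * nsq r) with hgdef
  have hgc : ContinuousOn g (Set.Icc ri ro) := by
    rw [hgdef]
    refine hnF.div (continuousOn_id.mul hnsqc) ?_
    intro r hr
    exact mul_ne_zero (hne0 r hr) (hnsqpos r).ne'
  have hI1int : IntervalIntegrable (fun r => W r * (U r - β) ^ 2 * g r) volume ri ro := by
    apply ContinuousOn.intervalIntegrable; rw [hIcc]
    exact (hWc.mul ((hUcont.sub continuousOn_const).pow 2)).mul hgc
  have hWSint : IntervalIntegrable (fun r => W r * (Complex.normSq (F r) / r)) volume ri ro := by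
    apply ContinuousOn.intervalIntegrable; rw [hIcc]
    exact hWc.mul (hnF.div continuousOn_id hne0)
  have hRC : Rr ≤ CC * S := by
    have hstepA : Rr = (∫ r in ri..ro, W r * (U r - β) ^ 2 * g r) + (β - c.re) * E := by
      rw [hRdef, hEdef, ← intervalIntegral.integral_const_mul,
        ← intervalIntegral.integral_add hI1int (hEint.const_mul _)]
      apply intervalIntegral.integral_congr
      intro r hr
      simp only [hgdef, hqdef]
      field_simp
      ring
    have hstepB : (∫ r in ri..ro, W r * (U r - β) ^ 2 * g r)
        ≤ ∫ r in ri..ro, (W r * (Complex.normSq (F r) / r)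
            + (2 * (c.re - β)) * (q r * Complex.normSq (F r) / nsq r)) := by
      apply intervalIntegral.integral_mono_on hio' hI1int
        (hWSint.add (hEint.const_mul _))
      intro r hr
      have hW0 : 0 ≤ W r := hWlo r hr
      have hr0 : 0 < r := lt_of_lt_of_le hri hr.1
      have hg0 : 0 ≤ g r := by
        simp only [hgdef]
        exact div_nonneg (Complex.normSq_nonneg _)
          (mul_nonneg hr0.le (hnsqpos r).le)
      have hkey : (U r - β) ^ 2 ≤ nsq r + 2 * (c.re - β) * (U r - β) := by
        simp only [hnsqdef]
        have hid : (U r - c.re) ^ 2 + 2 * (c.re - β) * (U r - β) - (U r - β) ^ 2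
            = (c.re - β) ^ 2 := by ring
        linarith [sq_nonneg (c.re - β), sq_nonneg c.im, hid]
      have h1 : W r * (U r - β) ^ 2 * g r
          ≤ W r * (nsq r + 2 * (c.re - β) * (U r - β)) * g r :=
        mul_le_mul_of_nonneg_right (mul_le_mul_of_nonneg_left hkey hW0) hg0
      have h2 : W r * (nsq r + 2 * (c.re - β) * (U r - β)) * g r
          = W r * (Complex.normSq (F r) / r)
            + (2 * (c.re - β)) * (q r * Complex.normSq (F r) / nsq r) := by
        simp only [hgdef, hqdef]
        have hnz : nsq r ≠ 0 := (hnsqpos r).ne'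
        field_simp
      exact h1.trans h2.le
    have hstepC : (∫ r in ri..ro, (W r * (Complex.normSq (F r) / r)
          + (2 * (c.re - β)) * (q r * Complex.normSq (F r) / nsq r)))
        = (∫ r in ri..ro, W r * (Complex.normSq (F r) / r)) + (2 * (c.re - β)) * E := by
      rw [intervalIntegral.integral_add hWSint (hEint.const_mul _),
        intervalIntegral.integral_const_mul, hEdef]
    have hstepD : (∫ r in ri..ro, W r * (Complex.normSq (F r) / r)) ≤ CC * S := by
      rw [hSdef, ← intervalIntegral.integral_const_mul]
      apply intervalIntegral.integral_mono_on hio' hWSint (hSint.const_mul _)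
      intro r hr
      have hx0 : 0 ≤ Complex.normSq (F r) / r :=
        div_nonneg (Complex.normSq_nonneg _) (lt_of_lt_of_le hri hr.1).le
      exact mul_le_mul_of_nonneg_right (hWhi r hr) hx0
    rw [hstepA, hE0]
    rw [hE0] at hstepC
    simp at hstepC
    linarith
  -- Poincaré setup
  set L : ℝ := Real.log ro - Real.log ri with hLdef
  have hL : 0 < L := sub_pos.2 (Real.log_lt_log hri hio)
  set a : ℝ := Real.pi / L with hadef
  have ha : 0 < a := div_pos Real.pi_pos hL
  have hCa : CC = a ^ 2 / ro ^ 2 := by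
    rw [hCdef, hadef]
    have hld : Real.log (ri / ro) = Real.log ri - Real.log ro := Real.log_div hri.ne' hro.ne'
    rw [hld]
    rw [show Real.log ri - Real.log ro = -L by rw [hLdef]; ring]
    rw [div_neg]
    ring
  set b : ℝ := Real.sqrt (max (a ^ 2 / 2) (a ^ 2 - k ^ 2 * ro ^ 2 / 2)) with hbdef
  have hmax0 : 0 < max (a ^ 2 / 2) (a ^ 2 - k ^ 2 * ro ^ 2 / 2) :=
    lt_max_of_lt_left (by positivity)
  have hb2 : b ^ 2 = max (a ^ 2 / 2) (a ^ 2 - k ^ 2 * ro ^ 2 / 2) := Real.sq_sqrt hmax0.le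
  have hbpos : 0 < b := Real.sqrt_pos.2 hmax0
  have hmaxlt : max (a ^ 2 / 2) (a ^ 2 - k ^ 2 * ro ^ 2 / 2) < a ^ 2 := by
    apply max_lt
    · have h0a : 0 < a ^ 2 := pow_pos ha 2
      linarith
    · have h0k : 0 < k ^ 2 * ro ^ 2 := by positivity
      linarith
  have hblt : b < a := by
    rw [hbdef]
    calc Real.sqrt (max (a ^ 2 / 2) (a ^ 2 - k ^ 2 * ro ^ 2 / 2))
        < Real.sqrt (a ^ 2) := Real.sqrt_lt_sqrt hmax0.le hmaxlt
      _ = a := Real.sqrt_sq ha.le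
  have hbk : a ^ 2 < b ^ 2 + k ^ 2 * ro ^ 2 := by
    have h6 := le_max_right (a ^ 2 / 2) (a ^ 2 - k ^ 2 * ro ^ 2 / 2)
    rw [← hb2] at h6
    have h0k : 0 < k ^ 2 * ro ^ 2 := by positivity
    linarith
  clear_value L a b
  set δ : ℝ := (Real.pi - b * L) / 2 with hδdef
  have hδpos : 0 < δ := by
    have h1 : b * L < a * L := mul_lt_mul_of_pos_right hblt hL
    have h2 : a * L = Real.pi := by rw [hadef]; field_simp
    rw [hδdef]; linarith
  have hsum : b * (Real.log ro - Real.log ri) + 2 * δ = Real.pi := by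
    rw [hδdef, show Real.log ro - Real.log ri = L from hLdef.symm]
    ring
  -- apply the Poincaré lemma to real and imaginary parts
  have hFre : ∀ r ∈ Set.Ioo ri ro, HasDerivAt (fun r => (F r).re) ((D r).re) r := by
    intro r hr
    exact Complex.reCLM.hasFDerivAt.comp_hasDerivAt r (hFD r hr)
  have hFim : ∀ r ∈ Set.Ioo ri ro, HasDerivAt (fun r => (F r).im) ((D r).im) r := by
    intro r hr
    exact Complex.imCLM.hasFDerivAt.comp_hasDerivAt r (hFD r hr)
  have hPre := poincare_aux ri ro b δ hri hio hbpos hδpos hsum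
    (fun r => (F r).re) (fun r => (D r).re)
    (Complex.continuous_re.comp_continuousOn hFcont)
    (Complex.continuous_re.comp_continuousOn hDcont)
    hFre (by simp [hFdef, hGi]) (by simp [hFdef, hGo])
  have hPim := poincare_aux ri ro b δ hri hio hbpos hδpos hsum
    (fun r => (F r).im) (fun r => (D r).im)
    (Complex.continuous_im.comp_continuousOn hFcont)
    (Complex.continuous_im.comp_continuousOn hDcont)
    hFim (by simp [hFdef, hGi]) (by simp [hFdef, hGo])
  -- combine: b^2 * S ≤ ro^2 * T
  have hFreint : IntervalIntegrable (fun r => (F r).re ^ 2 / r) volume ri ro := by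
    apply ContinuousOn.intervalIntegrable; rw [hIcc]
    exact ((Complex.continuous_re.comp_continuousOn hFcont).pow 2).div continuousOn_id hne0
  have hFimint : IntervalIntegrable (fun r => (F r).im ^ 2 / r) volume ri ro := by
    apply ContinuousOn.intervalIntegrable; rw [hIcc]
    exact ((Complex.continuous_im.comp_continuousOn hFcont).pow 2).div continuousOn_id hne0
  have hDreint : IntervalIntegrable (fun r => r * (D r).re ^ 2) volume ri ro := by
    apply ContinuousOn.intervalIntegrable; rw [hIcc]
    exact continuousOn_id.mul ((Complex.continuous_re.comp_continuousOn hDcont).pow 2)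
  have hDimint : IntervalIntegrable (fun r => r * (D r).im ^ 2) volume ri ro := by
    apply ContinuousOn.intervalIntegrable; rw [hIcc]
    exact continuousOn_id.mul ((Complex.continuous_im.comp_continuousOn hDcont).pow 2)
  have hsplitS : S = (∫ r in ri..ro, (F r).re ^ 2 / r) + ∫ r in ri..ro, (F r).im ^ 2 / r := by
    rw [hSdef, ← intervalIntegral.integral_add hFreint hFimint]
    apply intervalIntegral.integral_congr
    intro r hr
    simp only [Complex.normSq_apply]
    ring
  have hT2 : (∫ r in ri..ro, r * (D r).re ^ 2) + (∫ r in ri..ro, r * (D r).im ^ 2)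
      ≤ ro ^ 2 * T := by
    rw [hTdef, ← intervalIntegral.integral_add hDreint hDimint,
      ← intervalIntegral.integral_const_mul]
    apply intervalIntegral.integral_mono_on hio' (hDreint.add hDimint)
      (hTint.const_mul _)
    intro r hr
    have hr0 : 0 < r := lt_of_lt_of_le hri hr.1
    have h7 : r * (D r).re ^ 2 + r * (D r).im ^ 2 = r * Complex.normSq (D r) := by
      simp only [Complex.normSq_apply]; ring
    rw [h7, ← mul_div_assoc, le_div_iff₀ hr0]
    have h8 : 0 ≤ Complex.normSq (D r) := Complex.normSq_nonneg _
    have h10 : r ^ 2 ≤ ro ^ 2 := pow_le_pow_left₀ hr0.le hr.2 2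
    calc r * Complex.normSq (D r) * r = r ^ 2 * Complex.normSq (D r) := by ring
      _ ≤ ro ^ 2 * Complex.normSq (D r) := mul_le_mul_of_nonneg_right h10 h8
  have hTS : b ^ 2 * S ≤ ro ^ 2 * T := by
    rw [hsplitS]
    calc b ^ 2 * ((∫ r in ri..ro, (F r).re ^ 2 / r) + ∫ r in ri..ro, (F r).im ^ 2 / r)
        = b ^ 2 * (∫ r in ri..ro, (F r).re ^ 2 / r)
          + b ^ 2 * ∫ r in ri..ro, (F r).im ^ 2 / r := by ring
      _ ≤ (∫ r in ri..ro, r * (D r).re ^ 2) + ∫ r in ri..ro, r * (D r).im ^ 2 := by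
          exact add_le_add hPre hPim
      _ ≤ ro ^ 2 * T := hT2
  -- conclude S = 0
  have hro2 : (0:ℝ) < ro ^ 2 := by positivity
  have hS0 : S ≤ 0 := by
    have h9 : k ^ 2 * S + T ≤ a ^ 2 / ro ^ 2 * S := by
      rw [← hCa]; linarith [hmain, hRC]
    have h9' := mul_le_mul_of_nonneg_right h9 hro2.le
    have hcancel : a ^ 2 / ro ^ 2 * S * ro ^ 2 = a ^ 2 * S := by field_simp
    rw [hcancel] at h9'
    by_contra hcon
    push_neg at hcon
    have hfac : (0:ℝ) < b ^ 2 + k ^ 2 * ro ^ 2 - a ^ 2 := by linarith [hbk]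
    have hprod := mul_pos hfac hcon
    have hx : (b ^ 2 + k ^ 2 * ro ^ 2 - a ^ 2) * S = b ^ 2 * S + k ^ 2 * S * ro ^ 2 - a ^ 2 * S := by
      ring
    have h9e : (k ^ 2 * S + T) * ro ^ 2 = k ^ 2 * S * ro ^ 2 + T * ro ^ 2 := by ring
    have hTe : ro ^ 2 * T = T * ro ^ 2 := by ring
    linarith only [h9', hTS, hprod, hx, h9e, hTe]
  -- conclusion
  intro r₀ hr₀
  by_contra hG0
  have hSpos : 0 < S := by
    rw [hSdef]
    apply intervalIntegral.integral_pos hio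
    · exact hnF.div continuousOn_id hne0
    · intro r hr
      exact div_nonneg (Complex.normSq_nonneg _) (lt_trans hri hr.1).le
    · refine ⟨r₀, hr₀, ?_⟩
      have hr₀0 : 0 < r₀ := lt_of_lt_of_le hri hr₀.1
      refine div_pos (Complex.normSq_pos.2 ?_) hr₀0
      show (r₀ : ℂ) * G r₀ ≠ 0
      exact mul_ne_zero (Complex.ofReal_ne_zero.2 hr₀0.ne') hG0
  linarith
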